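/- Let m ≥ 1 and 0 ≤ r ≤ m be integers, and let w be an integer with 0 ≤ w ≤ 2^m. Then the number A_{m,r}(w) of codewords of RM(m,r) of Hamming weight exactly w satisfies A_{m,r}(w) ≤ 2^{C(m,≤r)·h_b(w/2^m)}. -/

import Mathlib

/-- The `m`-bit binary representation (MSB first) of the coordinate index `s`,
as an evaluation point in `F₂^m` (lexicographic coordinate ordering). -/
def bitRepr (m : ℕ) (s : ℕ) : Fin m → ZMod 2 :=
  fun j => if Nat.testBit s (m - 1 - (j : ℕ)) then 1 else 0

/-- Evaluation of an `m`-variate polynomial over `F₂` at all points of `F₂^m`,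
listed in lexicographic order, as a linear map. -/
noncomputable def evalRM (m : ℕ) :
    MvPolynomial (Fin m) (ZMod 2) →ₗ[ZMod 2] (Fin (2 ^ m) → ZMod 2) :=
  LinearMap.pi fun s => (MvPolynomial.aeval (bitRepr m (s : ℕ))).toLinearMap

/-- The Reed-Muller code RM(m,r): evaluation vectors of polynomials of total degree ≤ r. -/
noncomputable def RM (m r : ℕ) : Submodule (ZMod 2) (Fin (2 ^ m) → ZMod 2) :=
  (MvPolynomial.restrictTotalDegree (Fin m) (ZMod 2) r).map (evalRM m)

/-- A word `w` satisfies the `(d,∞)`-RLL constraint: any two 1s are separated by at least d 0s. -/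
def RLL (d : ℕ) {n : ℕ} (w : Fin n → ZMod 2) : Prop :=
  ∀ i j : Fin n, w i = 1 → (i : ℕ) < (j : ℕ) → (j : ℕ) ≤ (i : ℕ) + d → w j = 0

/-- The binary entropy function (base-2 logarithm), with h_b(0) = h_b(1) = 0. -/
noncomputable def hb (p : ℝ) : ℝ := -(p * Real.logb 2 p) - (1 - p) * Real.logb 2 (1 - p)


open MvPolynomial Finset

/-- indicator point of a subset of coordinates -/
def pt {m : ℕ} (U : Finset (Fin m)) : Fin m → ZMod 2 := fun i => if i ∈ U then 1 else 0

lemma zmod2_cases (a : ZMod 2) : a = 0 ∨ a = 1 := by revert a; decide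

lemma card_filter_superset {m : ℕ} (A T : Finset (Fin m)) :
    (((T.powerset.filter fun W => A ⊆ W).card : ZMod 2)) = if A = T then 1 else 0 := by
  by_cases hAT : A ⊆ T
  · have himg : T.powerset.filter (fun W => A ⊆ W) = (T \ A).powerset.image (· ∪ A) := by
      ext W
      simp only [mem_filter, mem_powerset, mem_image]
      constructor
      · rintro ⟨hWT, hAW⟩
        exact ⟨W \ A, sdiff_subset_sdiff hWT le_rfl, Finset.sdiff_union_of_subset hAW⟩
      · rintro ⟨W', hW', rfl⟩
        constructor
        · exact Finset.union_subset ((hW'.trans (Finset.sdiff_subset)).trans le_rfl) hAT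
        · exact Finset.subset_union_right
    have hinj : Set.InjOn (· ∪ A) ((T \ A).powerset : Set (Finset (Fin m)))  := by
      intro x hx y hy hxy
      simp only [Finset.coe_powerset, Set.mem_preimage, Set.mem_powerset_iff,
        Finset.coe_subset, Finset.mem_coe, Finset.mem_powerset] at hx hy
      have hdx : Disjoint x A := Finset.disjoint_of_subset_left hx (Finset.sdiff_disjoint)
      have hdy : Disjoint y A := Finset.disjoint_of_subset_left hy (Finset.sdiff_disjoint)
      have := congrArg (· \ A) hxy
      simpa [Finset.union_sdiff_cancel_right hdx, Finset.union_sdiff_cancel_right hdy] using this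
    rw [himg, Finset.card_image_of_injOn hinj, Finset.card_powerset]
    by_cases hTA : T = A
    · simp [hTA]
    · have h1 : A ≠ T := fun h => hTA h.symm
      have h2 : (T \ A).Nonempty := by
        rw [Finset.sdiff_nonempty]
        intro h
        exact hTA (Finset.Subset.antisymm h hAT)
      have h3 : (T \ A).card ≠ 0 := by
        simpa [Finset.card_eq_zero, ← Finset.nonempty_iff_ne_empty] using h2.ne_empty
      rw [if_neg h1]
      obtain ⟨d, hd⟩ := Nat.exists_eq_succ_of_ne_zero h3
      rw [hd]
      push_cast
      have h2z : (2 : ZMod 2) = 0 := by decide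
      rw [h2z, zero_pow (Nat.succ_ne_zero d)]
  · have : T.powerset.filter (fun W => A ⊆ W) = ∅ := by
      rw [Finset.filter_eq_empty_iff]
      intro W hW hAW
      exact hAT (hAW.trans (Finset.mem_powerset.mp hW))
    rw [this]
    have : A ≠ T := by rintro rfl; exact hAT le_rfl
    simp [this]

lemma aeval_pt_monomial {m : ℕ} (α : Fin m →₀ ℕ) (c : ZMod 2) (U : Finset (Fin m)) :
    (aeval (pt U)) (monomial α c) = if α.support ⊆ U then c else 0 := by
  rw [MvPolynomial.aeval_monomial]
  have halg : algebraMap (ZMod 2) (ZMod 2) c = c := by simp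
  rw [halg]
  by_cases h : α.support ⊆ U
  · rw [if_pos h]
    have : α.prod (fun i k => pt U i ^ k) = 1 := by
      apply Finset.prod_eq_one
      intro i hi
      have : pt U i = 1 := by
        have := h hi
        simp [pt, this]
      simp [this]
    rw [this, mul_one]
  · rw [if_neg h]
    obtain ⟨i, hi, hiU⟩ := Finset.not_subset.mp h
    have : α.prod (fun i k => pt U i ^ k) = 0 := by
      apply Finset.prod_eq_zero hi
      have hp : pt U i = 0 := by simp [pt, hiU]
      have hα : α i ≠ 0 := Finsupp.mem_support_iff.mp hi
      simp [hp, zero_pow hα]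
    rw [this, mul_zero]

lemma sum_powerset_aeval_eq_zero {m r : ℕ} (f : MvPolynomial (Fin m) (ZMod 2))
    (hf : f.totalDegree ≤ r) (T : Finset (Fin m)) (hT : r < T.card) :
    ∑ W ∈ T.powerset, (aeval (pt W)) f = 0 := by
  have hW : ∀ W, (aeval (pt W)) f = ∑ α ∈ f.support, (aeval (pt W)) (monomial α (coeff α f)) := by
    intro W
    conv_lhs => rw [f.as_sum]
    rw [map_sum]
  rw [Finset.sum_congr rfl fun W _ => hW W, Finset.sum_comm]
  apply Finset.sum_eq_zero
  intro α hα
  have hne : α.support ≠ T := by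
    intro h
    have h1 : α.support.card ≤ α.sum fun _ e => e := by
      have := Finset.card_nsmul_le_sum α.support (fun i => α i) 1
        (fun i hi => Nat.one_le_iff_ne_zero.mpr (Finsupp.mem_support_iff.mp hi))
      simpa [Finsupp.sum] using this
    have h2 : (α.sum fun _ e => e) ≤ f.totalDegree := MvPolynomial.le_totalDegree hα
    rw [← h] at hT
    omega
  calc ∑ W ∈ T.powerset, (aeval (pt W)) (monomial α (coeff α f))
      = ∑ W ∈ T.powerset, if α.support ⊆ W then coeff α f else 0 := by
        apply Finset.sum_congr rfl; intro W _; rw [aeval_pt_monomial]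
    _ = ∑ W ∈ T.powerset.filter (fun W => α.support ⊆ W), coeff α f := by
        rw [Finset.sum_filter]
    _ = ((T.powerset.filter (fun W => α.support ⊆ W)).card : ZMod 2) * coeff α f := by
        rw [Finset.sum_const, nsmul_eq_mul]
    _ = 0 := by rw [card_filter_superset, if_neg hne, zero_mul]

lemma aeval_pt_eq_sum {m : ℕ} (f : MvPolynomial (Fin m) (ZMod 2)) (U : Finset (Fin m)) :
    (aeval (pt U)) f = ∑ T ∈ U.powerset, ∑ W ∈ T.powerset, (aeval (pt W)) f := by
  have hrw : ∀ T ∈ U.powerset, ∑ W ∈ T.powerset, (aeval (pt W)) f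
      = ∑ W ∈ U.powerset, if W ⊆ T then (aeval (pt W)) f else 0 := by
    intro T hT
    rw [Finset.mem_powerset] at hT
    have hpow : T.powerset = U.powerset.filter (fun W => W ⊆ T) := by
      ext W
      simp only [Finset.mem_powerset, Finset.mem_filter]
      exact ⟨fun h => ⟨h.trans hT, h⟩, fun h => h.2⟩
    rw [hpow, Finset.sum_filter]
  rw [Finset.sum_congr rfl hrw, Finset.sum_comm]
  have hinner : ∀ W ∈ U.powerset,
      (∑ T ∈ U.powerset, if W ⊆ T then (aeval (pt W)) f else 0)
        = if W = U then (aeval (pt W)) f else 0 := by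
    intro W _
    rw [← Finset.sum_filter, Finset.sum_const, nsmul_eq_mul, card_filter_superset]
    by_cases h : W = U <;> simp [h]
  rw [Finset.sum_congr rfl hinner, Finset.sum_ite_eq' U.powerset U (fun W => (aeval (pt W)) f)]
  simp

lemma vanish_extend {m r : ℕ} (f : MvPolynomial (Fin m) (ZMod 2)) (hf : f.totalDegree ≤ r)
    (h0 : ∀ U : Finset (Fin m), U.card ≤ r → (aeval (pt U)) f = 0) (U : Finset (Fin m)) :
    (aeval (pt U)) f = 0 := by
  rw [aeval_pt_eq_sum f U]
  apply Finset.sum_eq_zero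
  intro T _
  by_cases hT : T.card ≤ r
  · apply Finset.sum_eq_zero
    intro W hW
    exact h0 W ((Finset.card_le_card (Finset.mem_powerset.mp hW)).trans hT)
  · exact sum_powerset_aeval_eq_zero f hf T (not_le.mp hT)

lemma totalDegree_shift {m : ℕ} (t : Fin m → ZMod 2) (f : MvPolynomial (Fin m) (ZMod 2)) :
    (aeval (fun i => X i + C (t i)) f).totalDegree ≤ f.totalDegree := by
  conv_lhs => rw [f.as_sum]
  rw [map_sum]
  refine (MvPolynomial.totalDegree_finset_sum _ _).trans (Finset.sup_le ?_)
  intro α hα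
  rw [MvPolynomial.aeval_monomial]
  refine (MvPolynomial.totalDegree_mul _ _).trans ?_
  have h1 : (algebraMap (ZMod 2) (MvPolynomial (Fin m) (ZMod 2)) (coeff α f)).totalDegree = 0 := by
    rw [MvPolynomial.algebraMap_eq]
    exact MvPolynomial.totalDegree_C _
  rw [h1, zero_add]
  have h2 : (α.prod fun i k => (X i + C (t i) : MvPolynomial (Fin m) (ZMod 2)) ^ k).totalDegree
      ≤ α.sum fun _ e => e := by
    rw [Finsupp.prod]
    refine (MvPolynomial.totalDegree_finset_prod _ _).trans ?_
    rw [Finsupp.sum]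
    apply Finset.sum_le_sum
    intro i _
    refine (MvPolynomial.totalDegree_pow _ _).trans ?_
    have : (X i + C (t i) : MvPolynomial (Fin m) (ZMod 2)).totalDegree ≤ 1 := by
      refine (MvPolynomial.totalDegree_add _ _).trans ?_
      simp [MvPolynomial.totalDegree_X, MvPolynomial.totalDegree_C]
    calc α i * (X i + C (t i) : MvPolynomial (Fin m) (ZMod 2)).totalDegree ≤ α i * 1 :=
          Nat.mul_le_mul_left _ this
      _ = α i := Nat.mul_one _
  exact h2.trans (MvPolynomial.le_totalDegree hα)

lemma bitRepr_injective (m : ℕ) : Function.Injective (fun s : Fin (2^m) => bitRepr m (s : ℕ)) := by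
  intro s s' h
  apply Fin.ext
  apply Nat.eq_of_testBit_eq
  intro i
  by_cases hi : i < m
  · have hj : m - 1 - (m - 1 - i) = i := by omega
    have := congrFun h ⟨m - 1 - i, by omega⟩
    simp only [bitRepr, hj] at this
    by_cases hb1 : Nat.testBit (s : ℕ) i <;> by_cases hb2 : Nat.testBit (s' : ℕ) i <;>
      simp [hb1, hb2] at this ⊢
  · have h1 : (s : ℕ) < 2 ^ i := lt_of_lt_of_le s.isLt (Nat.pow_le_pow_right (by norm_num) (by omega))
    have h2 : (s' : ℕ) < 2 ^ i := lt_of_lt_of_le s'.isLt (Nat.pow_le_pow_right (by norm_num) (by omega))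
    rw [Nat.testBit_lt_two_pow h1, Nat.testBit_lt_two_pow h2]

noncomputable def ptIdx (m : ℕ) : Fin (2 ^ m) ≃ (Fin m → ZMod 2) :=
  Equiv.ofBijective (fun s => bitRepr m (s : ℕ))
    ((Fintype.bijective_iff_injective_and_card _).2 ⟨bitRepr_injective m, by
      simp [ZMod.card]⟩)

@[simp] lemma ptIdx_apply (m : ℕ) (s : Fin (2 ^ m)) : ptIdx m s = bitRepr m (s : ℕ) := rfl

lemma card_low_weight_sets (m r : ℕ) :
    ((univ : Finset (Finset (Fin m))).filter fun U => U.card ≤ r).card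
      = ∑ i ∈ Finset.range (r + 1), m.choose i := by
  have heq : ((univ : Finset (Finset (Fin m))).filter fun U => U.card ≤ r)
      = (Finset.range (r + 1)).biUnion fun i => Finset.powersetCard i univ := by
    ext U
    simp only [Finset.mem_filter, Finset.mem_univ, true_and, Finset.mem_biUnion,
      Finset.mem_range, Finset.mem_powersetCard_univ, Nat.lt_succ_iff]
    exact ⟨fun h => ⟨U.card, h, rfl⟩, fun ⟨i, hi, hc⟩ => hc ▸ hi⟩
  rw [heq, Finset.card_biUnion]
  · apply Finset.sum_congr rfl
    intro i _
    rw [Finset.card_powersetCard]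
    simp
  · intro i _ j _ hij
    rw [Function.onFun, Finset.disjoint_left]
    intro U hU hU'
    rw [Finset.mem_powersetCard_univ] at hU hU'
    exact hij (hU ▸ hU')

lemma two_rpow_mul_logb {p : ℝ} (hp : 0 ≤ p) : (2 : ℝ) ^ (p * Real.logb 2 p) = p ^ p := by
  rcases eq_or_lt_of_le hp with h | h
  · rw [← h]
    simp [Real.rpow_zero]
  · rw [mul_comm, Real.rpow_mul (by norm_num : (0:ℝ) ≤ 2), Real.rpow_logb (by norm_num) (by norm_num) h]

lemma two_rpow_hb_mul {p : ℝ} (hp0 : 0 ≤ p) (hp1 : p ≤ 1) :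
    (2 : ℝ) ^ hb p * (p ^ p * (1 - p) ^ (1 - p)) = 1 := by
  have h1 : (0:ℝ) ≤ 1 - p := by linarith
  rw [← two_rpow_mul_logb hp0, ← two_rpow_mul_logb h1]
  rw [← Real.rpow_add (by norm_num), ← Real.rpow_add (by norm_num)]
  have h : hb p + (p * Real.logb 2 p + (1 - p) * Real.logb 2 (1 - p)) = 0 := by rw [hb]; ring
  rw [h, Real.rpow_zero]

lemma hb_nonneg {p : ℝ} (hp0 : 0 ≤ p) (hp1 : p ≤ 1) : 0 ≤ hb p := by
  have hl1 : Real.logb 2 p ≤ 0 := Real.logb_nonpos (by norm_num) hp0 hp1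
  have hl2 : Real.logb 2 (1 - p) ≤ 0 := Real.logb_nonpos (by norm_num) (by linarith) (by linarith)
  have h1 : p * Real.logb 2 p ≤ 0 := mul_nonpos_iff.mpr (Or.inl ⟨hp0, hl1⟩)
  have h2 : (1 - p) * Real.logb 2 (1 - p) ≤ 0 := mul_nonpos_iff.mpr (Or.inl ⟨by linarith, hl2⟩)
  rw [hb]; linarith

lemma count_lemma {n : ℕ} (V : Finset (Fin n → ZMod 2)) (S : Finset (Fin n)) (M : ℕ)
    (hinj : ∀ c ∈ V, ∀ c' ∈ V, (∀ i ∈ S, c i = c' i) → c = c')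
    (hM : ∀ i ∈ S, (V.filter fun c => c i = 1).card = M) (hMN : M ≤ V.card) (hne : V.Nonempty) :
    (V.card : ℝ) * (((M : ℝ) / V.card) ^ ((M : ℝ) / V.card) *
      (1 - (M : ℝ) / V.card) ^ (1 - (M : ℝ) / V.card)) ^ S.card ≤ 1 := by
  classical
  obtain ⟨N, hNdef⟩ : ∃ k : ℕ, k = V.card := ⟨_, rfl⟩
  rw [← hNdef]
  rw [← hNdef] at hMN
  have hN : 0 < N := hNdef ▸ Finset.card_pos.mpr hne
  have hNR : (0:ℝ) < N := by exact_mod_cast hN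
  obtain ⟨p, hpdef⟩ : ∃ q : ℝ, q = (M : ℝ) / N := ⟨_, rfl⟩
  rw [← hpdef]
  have hp0 : 0 ≤ p := by rw [hpdef]; positivity
  have hp1 : p ≤ 1 := by
    rw [hpdef, div_le_one hNR]
    exact_mod_cast hMN
  have h1p : 0 ≤ 1 - p := by linarith
  have hnn : ∀ x : ZMod 2, (0:ℝ) ≤ if x = 1 then p else 1 - p := fun x => by
    split <;> linarith
  have hQ0 : ∀ a : { i // i ∈ S } → ZMod 2,
      0 ≤ ∏ i : { i // i ∈ S }, (if a i = 1 then p else 1 - p) :=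
    fun a => Finset.prod_nonneg fun i _ => hnn _
  have hQsum : ∑ a : { i // i ∈ S } → ZMod 2,
      ∏ i : { i // i ∈ S }, (if a i = 1 then p else 1 - p) = 1 := by
    rw [← Fintype.prod_sum (fun (i : { i // i ∈ S }) (x : ZMod 2) => if x = 1 then p else 1 - p)]
    have hz : ∑ x : ZMod 2, (if x = 1 then p else 1 - p) = 1 := by
      have huz : (Finset.univ : Finset (ZMod 2)) = {0, 1} := by decide
      rw [huz, Finset.sum_insert (by decide), Finset.sum_singleton]
      norm_num
    rw [Finset.prod_congr rfl fun i _ => hz, Finset.prod_const, one_pow]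
  have hsumV : ∑ c ∈ V, (∏ i : { i // i ∈ S }, (if c i.1 = 1 then p else 1 - p)) ≤ 1 := by
    have hinj' : Set.InjOn (fun (c : Fin n → ZMod 2) (i : { i // i ∈ S }) => c i.1) V := by
      intro c hc c' hc' hcc
      exact hinj c hc c' hc' fun i hi => congrFun hcc ⟨i, hi⟩
    have himg := Finset.sum_image (g := fun (c : Fin n → ZMod 2) (i : { i // i ∈ S }) => c i.1)
      (f := fun a : { i // i ∈ S } → ZMod 2 =>
        ∏ i : { i // i ∈ S }, (if a i = 1 then p else 1 - p))
      (fun x hx y hy h => hinj' hx hy h)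
    calc (∑ c ∈ V, ∏ i : { i // i ∈ S }, (if c i.1 = 1 then p else 1 - p))
        = ∑ a ∈ V.image (fun (c : Fin n → ZMod 2) (i : { i // i ∈ S }) => c i.1),
            ∏ i : { i // i ∈ S }, (if a i = 1 then p else 1 - p) := himg.symm
      _ ≤ ∑ a : { i // i ∈ S } → ZMod 2,
            ∏ i : { i // i ∈ S }, (if a i = 1 then p else 1 - p) :=
          Finset.sum_le_univ_sum_of_nonneg hQ0
      _ = 1 := hQsum
  have hamgm := Real.geom_mean_le_arith_mean_weighted V (fun _ => 1 / (N:ℝ))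
    (fun c => ∏ i : { i // i ∈ S }, (if c i.1 = 1 then p else 1 - p))
    (fun i _ => by positivity)
    (by rw [Finset.sum_const, ← hNdef, nsmul_eq_mul]; field_simp)
    (fun c _ => hQ0 _)
  have hub : ∑ c ∈ V, (1 / (N:ℝ)) * ∏ i : { i // i ∈ S }, (if c i.1 = 1 then p else 1 - p)
      ≤ 1 / N := by
    rw [← Finset.mul_sum]
    have h := mul_le_mul_of_nonneg_left hsumV (by positivity : (0:ℝ) ≤ 1 / (N:ℝ))
    exact h.trans_eq (mul_one _)
  have hgm : (∏ c ∈ V, (∏ i : { i // i ∈ S }, (if c i.1 = 1 then p else 1 - p)) ^ (1 / (N:ℝ)))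
      = (p ^ p * (1 - p) ^ (1 - p)) ^ S.card := by
    have hstep : ∀ c ∈ V, (∏ i : { i // i ∈ S }, (if c i.1 = 1 then p else 1 - p)) ^ (1 / (N:ℝ))
        = ∏ i : { i // i ∈ S }, (if c i.1 = 1 then p else 1 - p) ^ (1 / (N:ℝ)) := by
      intro c _
      exact (Real.finset_prod_rpow Finset.univ
        (fun i : { i // i ∈ S } => if c i.1 = 1 then p else 1 - p)
        (fun i _ => hnn _) (1 / (N:ℝ))).symm
    rw [Finset.prod_congr rfl hstep, Finset.prod_comm]
    have hcol : ∀ i : { i // i ∈ S },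
        (∏ c ∈ V, (if c i.1 = 1 then p else 1 - p) ^ (1 / (N:ℝ)))
          = p ^ p * (1 - p) ^ (1 - p) := by
      intro i
      rw [← Finset.prod_filter_mul_prod_filter_not V (fun c => c i.1 = 1)]
      have hc1 : (V.filter fun c => c i.1 = 1).card = M := hM i.1 i.2
      have hc0 : (V.filter fun c => ¬ c i.1 = 1).card = N - M := by
        have h2 : (V.filter fun c => c i.1 = 1).card
            + (V.filter fun c => ¬ c i.1 = 1).card = V.card :=
          Finset.card_filter_add_card_filter_not _
        rw [hc1, ← hNdef] at h2
        exact (Nat.sub_eq_of_eq_add' h2.symm).symm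
      have hsplit1 := Finset.prod_eq_pow_card
        (s := V.filter (fun c => c i.1 = 1))
        (f := fun c => (if c i.1 = 1 then p else 1 - p) ^ (1 / (N:ℝ)))
        (b := p ^ (1 / (N:ℝ)))
        (fun c hc => by simp only [if_pos (Finset.mem_filter.mp hc).2])
      rw [hc1] at hsplit1
      have hsplit0 := Finset.prod_eq_pow_card
        (s := V.filter (fun c => ¬ c i.1 = 1))
        (f := fun c => (if c i.1 = 1 then p else 1 - p) ^ (1 / (N:ℝ)))
        (b := (1 - p) ^ (1 / (N:ℝ)))
        (fun c hc => by simp only [if_neg (Finset.mem_filter.mp hc).2])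
      rw [hc0] at hsplit0
      rw [hsplit1, hsplit0]
      have e1 : (p ^ (1 / (N:ℝ))) ^ M = p ^ p := by
        rw [← Real.rpow_natCast (p ^ (1 / (N:ℝ))) M, ← Real.rpow_mul hp0]
        rw [hpdef]
        congr 1
        field_simp
      have e2 : ((1 - p) ^ (1 / (N:ℝ))) ^ (N - M) = (1 - p) ^ (1 - p) := by
        rw [← Real.rpow_natCast ((1 - p) ^ (1 / (N:ℝ))) (N - M), ← Real.rpow_mul h1p]
        congr 1
        rw [Nat.cast_sub hMN, hpdef]
        field_simp
      rw [e1, e2]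
    rw [Finset.prod_congr rfl (fun i _ => hcol i), Finset.prod_const, Finset.card_univ,
      Fintype.card_coe]
  rw [hgm] at hamgm
  have hfin := hamgm.trans hub
  calc (N:ℝ) * (p ^ p * (1 - p) ^ (1 - p)) ^ S.card ≤ (N:ℝ) * (1 / N) :=
        mul_le_mul_of_nonneg_left hfin hNR.le
    _ = 1 := by field_simp

lemma evalRM_apply {m : ℕ} (f : MvPolynomial (Fin m) (ZMod 2)) (s : Fin (2 ^ m)) :
    evalRM m f s = aeval (bitRepr m (s : ℕ)) f := rfl

lemma zmod2_add_add (a b : ZMod 2) : a + (a + b) = b := by revert a b; decide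

lemma RM_comp_shift {m r : ℕ} (t : Fin m → ZMod 2) (c : Fin (2 ^ m) → ZMod 2)
    (hc : c ∈ RM m r) : (fun s => c ((ptIdx m).symm (ptIdx m s + t))) ∈ RM m r := by
  obtain ⟨f, hf, hfc⟩ := hc
  refine ⟨aeval (fun i => X i + C (t i)) f, ?_, ?_⟩
  · rw [SetLike.mem_coe, MvPolynomial.mem_restrictTotalDegree] at hf ⊢
    exact (totalDegree_shift t f).trans hf
  · funext s
    rw [evalRM_apply, MvPolynomial.comp_aeval_apply]
    have h1 : (fun i => (aeval (bitRepr m (s : ℕ))) (X i + C (t i))) = ptIdx m s + t := by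
      funext i
      simp [ptIdx_apply, Pi.add_apply]
    rw [h1, ← hfc, evalRM_apply]
    have h2 : bitRepr m (((ptIdx m).symm (ptIdx m s + t) : Fin (2 ^ m)) : ℕ) = ptIdx m s + t :=
      (ptIdx m).apply_symm_apply (ptIdx m s + t)
    rw [h2]

lemma filter_card_eq {m r w : ℕ} (V : Finset (Fin (2 ^ m) → ZMod 2))
    (hV : ∀ c, c ∈ V ↔ c ∈ RM m r ∧ hammingNorm c = w) (s₀ s₁ : Fin (2 ^ m)) :
    (V.filter fun c => c s₀ = 1).card = (V.filter fun c => c s₁ = 1).card := by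
  classical
  have hadd : ∀ v : Fin m → ZMod 2, ∀ a b : Fin (2^m),
      ptIdx m a + (ptIdx m a + ptIdx m b) = ptIdx m b := fun v a b => by
    funext i; exact zmod2_add_add _ _
  set t : Fin m → ZMod 2 := ptIdx m s₀ + ptIdx m s₁ with ht
  set π : Fin (2 ^ m) → Fin (2 ^ m) := fun s => (ptIdx m).symm (ptIdx m s + t) with hπ
  have hπval : ∀ s, ptIdx m (π s) = ptIdx m s + t := fun s => (ptIdx m).apply_symm_apply _
  have hπinv : ∀ s, π (π s) = s := by
    intro s
    have : ptIdx m (π (π s)) = ptIdx m s := by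
      rw [hπval, hπval, ht]
      funext i
      simp only [Pi.add_apply]
      generalize ptIdx m s i = a
      generalize ptIdx m s₀ i = b
      generalize ptIdx m s₁ i = c
      revert a b c; decide
    exact (ptIdx m).injective this
  have hπs₁ : π s₁ = s₀ := by
    apply (ptIdx m).injective
    rw [hπval, ht]
    funext i
    simp only [Pi.add_apply]
    generalize ptIdx m s₁ i = a
    generalize ptIdx m s₀ i = b
    revert a b; decide
  have hπs₀ : π s₀ = s₁ := by
    apply (ptIdx m).injective
    rw [hπval, ht]
    funext i
    simp only [Pi.add_apply]
    generalize ptIdx m s₀ i = a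
    generalize ptIdx m s₁ i = b
    revert a b; decide
  have hbij : Function.Bijective π := Function.Involutive.bijective hπinv
  have hnorm : ∀ c : Fin (2 ^ m) → ZMod 2, hammingNorm (fun s => c (π s)) = hammingNorm c := by
    intro c
    simp only [hammingNorm]
    refine Finset.card_bij (fun s _ => π s) ?_ ?_ ?_
    · intro a ha
      simp only [Finset.mem_filter, Finset.mem_univ, true_and] at ha ⊢
      exact ha
    · intro a _ b _ h
      exact hbij.1 h
    · intro b hb
      simp only [Finset.mem_filter, Finset.mem_univ, true_and] at hb ⊢
      exact ⟨π b, by rw [hπinv]; exact hb, hπinv b⟩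
  have hmemV : ∀ c, c ∈ V → (fun s => c (π s)) ∈ V := by
    intro c hc
    rw [hV] at hc ⊢
    exact ⟨RM_comp_shift t c hc.1, (hnorm c).trans hc.2⟩
  refine Finset.card_bij (fun c _ => fun s => c (π s)) ?_ ?_ ?_
  · intro c hc
    rw [Finset.mem_filter] at hc ⊢
    refine ⟨hmemV c hc.1, ?_⟩
    show c (π s₁) = 1
    rw [hπs₁]
    exact hc.2
  · intro a _ b _ h
    funext s
    have := congrFun h (π s)
    simpa only [hπinv] using this
  · intro c hc
    rw [Finset.mem_filter] at hc
    refine ⟨fun s => c (π s), Finset.mem_filter.mpr ⟨hmemV c hc.1, ?_⟩, ?_⟩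
    · show c (π s₀) = 1
      rw [hπs₀]
      exact hc.2
    · funext s
      simp only [hπinv]

/-- The number A_{m,r}(w) of codewords of RM(m,r) of Hamming weight exactly w
satisfies A_{m,r}(w) ≤ 2^{C(m,≤r)·h_b(w/2^m)}. -/
theorem stmt15 (m r w : ℕ) (hm : 1 ≤ m) (hr : r ≤ m) (hw : w ≤ 2 ^ m) :
    ({c : Fin (2 ^ m) → ZMod 2 | c ∈ RM m r ∧ hammingNorm c = w}.ncard : ℝ) ≤
      (2 : ℝ) ^ ((∑ i ∈ Finset.range (r + 1), (m.choose i : ℝ)) * hb ((w : ℝ) / 2 ^ m)) := by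
  classical
  have hfin : {c : Fin (2 ^ m) → ZMod 2 | c ∈ RM m r ∧ hammingNorm c = w}.Finite :=
    Set.toFinite _
  rw [Set.ncard_eq_toFinset_card _ hfin]
  set V := hfin.toFinset with hVdef
  have hVmem : ∀ c, c ∈ V ↔ c ∈ RM m r ∧ hammingNorm c = w := fun c => hfin.mem_toFinset
  set p : ℝ := (w : ℝ) / 2 ^ m with hpdef
  have h2m : (0:ℝ) < 2 ^ m := by positivity
  have hp0 : 0 ≤ p := by rw [hpdef]; positivity
  have hp1 : p ≤ 1 := by rw [hpdef, div_le_one h2m]; exact_mod_cast hw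
  have hKcast : (∑ i ∈ Finset.range (r + 1), (m.choose i : ℝ))
      = ((∑ i ∈ Finset.range (r + 1), m.choose i : ℕ) : ℝ) := by push_cast; rfl
  rcases Finset.eq_empty_or_nonempty V with hVe | hne
  · rw [hVe]
    simp only [Finset.card_empty, Nat.cast_zero]
    positivity
  set Uof : Fin (2 ^ m) → Finset (Fin m) :=
    fun s => Finset.univ.filter (fun j => bitRepr m (s : ℕ) j = 1) with hUofdef
  have hptUof : ∀ s, pt (Uof s) = bitRepr m (s : ℕ) := by
    intro s; funext j
    simp only [pt, hUofdef, Finset.mem_filter, Finset.mem_univ, true_and]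
    rcases zmod2_cases (bitRepr m (s : ℕ) j) with h | h <;> simp [h]
  set S : Finset (Fin (2 ^ m)) := Finset.univ.filter (fun s => (Uof s).card ≤ r) with hSdef
  have hinj : ∀ c ∈ V, ∀ c' ∈ V, (∀ i ∈ S, c i = c' i) → c = c' := by
    intro c hc c' hc' hagree
    obtain ⟨hcRM, -⟩ := (hVmem c).mp hc
    obtain ⟨hcRM', -⟩ := (hVmem c').mp hc'
    obtain ⟨f, hf, hfc⟩ := hcRM
    obtain ⟨f', hf', hfc'⟩ := hcRM'
    rw [SetLike.mem_coe] at hf hf'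
    have hfsub : f - f' ∈ MvPolynomial.restrictTotalDegree (Fin m) (ZMod 2) r := sub_mem hf hf'
    have hdeg : (f - f').totalDegree ≤ r :=
      (MvPolynomial.mem_restrictTotalDegree _ _ _).mp hfsub
    have hvan0 : ∀ U : Finset (Fin m), U.card ≤ r → aeval (pt U) (f - f') = 0 := by
      intro U hU
      have hs : bitRepr m (((ptIdx m).symm (pt U) : Fin (2 ^ m)) : ℕ) = pt U :=
        (ptIdx m).apply_symm_apply (pt U)
      set s : Fin (2 ^ m) := (ptIdx m).symm (pt U) with hsdef
      have hUofs : Uof s = U := by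
        ext j
        simp only [hUofdef, Finset.mem_filter, Finset.mem_univ, true_and, hs]
        simp only [pt]
        by_cases hj : j ∈ U <;> simp [hj]
      have hsS : s ∈ S := by
        rw [hSdef, Finset.mem_filter]
        exact ⟨Finset.mem_univ _, by rw [hUofs]; exact hU⟩
      have heq : c s = c' s := hagree s hsS
      have hz : aeval (bitRepr m (s : ℕ)) (f - f') = 0 := by
        have h1 : evalRM m (f - f') s = 0 := by
          rw [map_sub]
          show evalRM m f s - evalRM m f' s = 0
          rw [hfc, hfc', heq, sub_self]
        rw [← evalRM_apply, h1]
      rwa [hs] at hz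
    have hvan := fun U => vanish_extend (f - f') hdeg hvan0 U
    funext s
    have h0 : aeval (bitRepr m (s : ℕ)) (f - f') = 0 := by
      have := hvan (Uof s)
      rwa [hptUof s] at this
    have h1 : evalRM m f s - evalRM m f' s = 0 := by
      have h2 : evalRM m (f - f') s = 0 := h0
      rw [map_sub] at h2
      exact h2
    rw [hfc, hfc'] at h1
    exact sub_eq_zero.mp h1
  obtain ⟨s₀⟩ : Nonempty (Fin (2 ^ m)) := ⟨⟨0, by positivity⟩⟩
  set M : ℕ := (V.filter fun c => c s₀ = 1).card with hMdef
  have hMconst : ∀ i ∈ S, (V.filter fun c => c i = 1).card = M :=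
    fun i _ => filter_card_eq V hVmem i s₀
  have hMN : M ≤ V.card := Finset.card_filter_le _ _
  have hdouble : 2 ^ m * M = w * V.card := by
    have h1 : ∑ s : Fin (2 ^ m), (V.filter fun c => c s = 1).card
        = ∑ _s : Fin (2 ^ m), M :=
      Finset.sum_congr rfl fun s _ => filter_card_eq V hVmem s s₀
    have h2 : ∑ s : Fin (2 ^ m), (V.filter fun c => c s = 1).card = ∑ c ∈ V, hammingNorm c := by
      have hrw : ∀ s : Fin (2 ^ m), (V.filter fun c => c s = 1).card
          = ∑ c ∈ V, if c s = 1 then 1 else 0 := fun s => Finset.card_filter _ _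
      rw [Finset.sum_congr rfl fun s _ => hrw s, Finset.sum_comm]
      apply Finset.sum_congr rfl
      intro c _
      rw [← Finset.card_filter]
      have hfe : (Finset.univ.filter fun s => c s = 1) = (Finset.univ.filter fun s => c s ≠ 0) := by
        apply Finset.filter_congr
        intro s _
        rcases zmod2_cases (c s) with h | h <;> rw [h] <;> simp
      rw [hfe]
      rfl
    have h3 : ∑ c ∈ V, hammingNorm c = V.card * w := by
      rw [Finset.sum_congr rfl fun c hc => ((hVmem c).mp hc).2, Finset.sum_const, smul_eq_mul]
    have h4 : ∑ _s : Fin (2 ^ m), M = 2 ^ m * M := by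
      rw [Finset.sum_const, Finset.card_univ, Fintype.card_fin, smul_eq_mul]
    rw [h4] at h1
    rw [h2, h3] at h1
    rw [← h1, Nat.mul_comm]
  have hNR : (0:ℝ) < V.card := by
    have := Finset.card_pos.mpr hne
    exact_mod_cast this
  have hq : (M : ℝ) / V.card = p := by
    rw [hpdef, div_eq_div_iff hNR.ne' h2m.ne']
    have hcast : (2:ℝ) ^ m * M = w * V.card := by exact_mod_cast hdouble
    linarith [hcast]
  have hcount := count_lemma V S M hinj hMconst hMN hne
  rw [hq] at hcount
  have hScard : S.card ≤ ∑ i ∈ Finset.range (r + 1), m.choose i := by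
    rw [← card_low_weight_sets m r]
    apply Finset.card_le_card_of_injOn Uof
    · intro s hs
      simp only [hSdef, Finset.mem_coe, Finset.mem_filter] at hs
      rw [Finset.mem_coe, Finset.mem_filter]
      exact ⟨Finset.mem_univ _, hs.2⟩
    · intro s hs s' hs' h
      apply bitRepr_injective m
      show bitRepr m (s : ℕ) = bitRepr m (s' : ℕ)
      rw [← hptUof s, ← hptUof s', h]
  have ha : (0:ℝ) < 2 ^ hb p := Real.rpow_pos_of_pos (by norm_num) _
  have hX : p ^ p * (1 - p) ^ (1 - p) = ((2:ℝ) ^ hb p)⁻¹ :=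
    eq_inv_of_mul_eq_one_right (two_rpow_hb_mul hp0 hp1)
  rw [hX, inv_pow] at hcount
  have hy : (0:ℝ) < ((2:ℝ) ^ hb p) ^ S.card := pow_pos ha _
  have hN2 : (V.card:ℝ) ≤ ((2:ℝ) ^ hb p) ^ S.card := by
    have h5 := mul_le_mul_of_nonneg_right hcount hy.le
    rwa [one_mul, mul_assoc, inv_mul_cancel₀ (ne_of_gt hy), mul_one] at h5
  refine hN2.trans ?_
  rw [← Real.rpow_natCast ((2:ℝ) ^ hb p) S.card, ← Real.rpow_mul (by norm_num : (0:ℝ) ≤ 2)]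
  apply Real.rpow_le_rpow_of_exponent_le (by norm_num : (1:ℝ) ≤ 2)
  rw [hKcast]
  calc hb p * S.card ≤ hb p * (∑ i ∈ Finset.range (r + 1), m.choose i : ℕ) := by
        apply mul_le_mul_of_nonneg_left _ (hb_nonneg hp0 hp1)
        exact_mod_cast hScard
    _ = ((∑ i ∈ Finset.range (r + 1), m.choose i : ℕ) : ℝ) * hb p := mul_comm _ _
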